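/- Let G be a graph and let G' be the graph obtained by taking two disjoint copies G1 and G2 of G and adding all edges between V(G1) and V(G2). Then tree-α(G') = α(G). -/

import Mathlib

open SimpleGraph

/-- A set of vertices is independent if no two of its members are adjacent. -/
def SimpleGraph.IsIndep {V : Type} (G : SimpleGraph V) (s : Set V) : Prop :=
  s.Pairwise fun u v => ¬ G.Adj u v

/-- The independence number of the subgraph of `G` induced by `W`:
the largest size of a finite independent set contained in `W`. -/
noncomputable def alphaOn {V : Type} (G : SimpleGraph V) (W : Set V) : ℕ :=
  sSup {n | ∃ S : Finset V, ↑S ⊆ W ∧ G.IsIndep ↑S ∧ S.card = n}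

/-- A tree decomposition of `G` with decomposition tree `tree`. -/
structure TreeDecomp {V T : Type} (G : SimpleGraph V) (tree : SimpleGraph T) : Type where
  bag : T → Set V
  isTree : tree.IsTree
  mem_bag : ∀ v : V, ∃ t, v ∈ bag t
  edge_bag : ∀ ⦃u v : V⦄, G.Adj u v → ∃ t, u ∈ bag t ∧ v ∈ bag t
  conn : ∀ v : V, (tree.induce {t | v ∈ bag t}).Connected

/-- `tree-α(G) ≤ k`: some tree decomposition of `G` has all bags of independence number `≤ k`. -/
def TreeAlphaLE {V : Type} (G : SimpleGraph V) (k : ℕ) : Prop :=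
  ∃ (T : Type) (tree : SimpleGraph T) (td : TreeDecomp G tree),
    ∀ t : T, alphaOn G (td.bag t) ≤ k

/-- The join of two disjoint copies of `G`: all edges between the copies are added. -/
def joinCopies {V : Type} (G : SimpleGraph V) : SimpleGraph (V ⊕ V) where
  Adj x y := match x, y with
    | Sum.inl u, Sum.inl v => G.Adj u v
    | Sum.inr u, Sum.inr v => G.Adj u v
    | Sum.inl _, Sum.inr _ => True
    | Sum.inr _, Sum.inl _ => True
  symm := by
    constructor
    rintro (u | u) (v | v) h
    · exact h.symm
    · trivial
    · trivial
    · exact h.symm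
  loopless := by
    constructor
    rintro (u | u) h
    · exact G.irrefl h
    · exact G.irrefl h



section TreeAux

attribute [local instance] Classical.decEq

variable {T : Type} {tree : SimpleGraph T}

/-- The unique path between two vertices of a tree, as a walk. -/
noncomputable def treePath (ht : tree.IsTree) (x y : T) : tree.Walk x y :=
  ((ht.isConnected.preconnected x y).some.toPath : tree.Walk x y)

lemma treePath_isPath (ht : tree.IsTree) (x y : T) : (treePath ht x y).IsPath :=
  Walk.bypass_isPath _

lemma eq_treePath (ht : tree.IsTree) {x y : T} (p : tree.Walk x y) (hp : p.IsPath) :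
    p = treePath ht x y := by
  obtain ⟨q, _, hq⟩ := ht.existsUnique_path x y
  rw [hq p hp, hq _ (treePath_isPath ht x y)]

lemma treePath_support_subset (ht : tree.IsTree) {x y : T} (w : tree.Walk x y) :
    (treePath ht x y).support ⊆ w.support := by
  have h : (w.toPath : tree.Walk x y) = treePath ht x y :=
    eq_treePath ht _ w.toPath.2
  rw [← h]
  exact Walk.support_toPath_subset w

lemma treePath_length (ht : tree.IsTree) (x y : T) :
    (treePath ht x y).length = tree.dist x y := by
  obtain ⟨w, hw⟩ := ht.isConnected.exists_walk_length_eq_dist x y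
  refine le_antisymm ?_ (SimpleGraph.dist_le _)
  have h : w.bypass = treePath ht x y := eq_treePath ht _ (Walk.bypass_isPath w)
  calc (treePath ht x y).length = w.bypass.length := by rw [h]
    _ ≤ w.length := Walk.length_bypass_le w
    _ = tree.dist x y := hw

lemma dist_add_dist_of_mem_treePath (ht : tree.IsTree) {x y u : T}
    (hu : u ∈ (treePath ht x y).support) :
    tree.dist x u + tree.dist u y = tree.dist x y := by
  have h1 := (treePath ht x y).take_spec hu
  have h2 := congrArg Walk.length h1
  rw [Walk.length_append, treePath_length] at h2
  have ha : tree.dist x u ≤ ((treePath ht x y).takeUntil u hu).length :=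
    SimpleGraph.dist_le _
  have hb : tree.dist u y ≤ ((treePath ht x y).dropUntil u hu).length :=
    SimpleGraph.dist_le _
  have htr : tree.dist x y ≤ tree.dist x u + tree.dist u y :=
    ht.isConnected.dist_triangle
  omega

lemma treePath_subset_of_induce_connected (ht : tree.IsTree) {C : Set T}
    (hC : (tree.induce C).Connected) {x y : T} (hx : x ∈ C) (hy : y ∈ C) :
    ∀ z ∈ (treePath ht x y).support, z ∈ C := by
  obtain ⟨w⟩ := hC.preconnected ⟨x, hx⟩ ⟨y, hy⟩
  intro z hz
  have hsub := treePath_support_subset ht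
    (((w.map (SimpleGraph.Embedding.induce C).toHom).copy rfl rfl : tree.Walk x y))
  have hz' := hsub hz
  replace hz' : z ∈ (w.map (SimpleGraph.Embedding.induce C).toHom).support := hz'
  rw [Walk.support_map] at hz'
  obtain ⟨⟨z', hz'C⟩, _, rfl⟩ := List.mem_map.mp hz'
  exact hz'C

lemma exists_entry {C : Set T} : ∀ {r s : T} (w : tree.Walk r s), s ∈ C →
    ∃ u, u ∈ C ∧ u ∈ w.support ∧
      ∃ q : tree.Walk r u, ∀ z ∈ q.support, z ∈ C → z = u := by
  intro r s w
  induction w with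
  | nil => exact fun hs => ⟨_, hs, by simp, Walk.nil, by simp⟩
  | @cons a b c h p ih =>
    intro hs
    by_cases hr : a ∈ C
    · exact ⟨a, hr, by simp, Walk.nil, by simp⟩
    · obtain ⟨u, hu, hus, q, hq⟩ := ih hs
      refine ⟨u, hu, by simp [hus], Walk.cons h q, ?_⟩
      intro z hz hzC
      rw [Walk.support_cons, List.mem_cons] at hz
      rcases hz with rfl | hz
      · exact absurd hzC hr
      · exact hq z hz hzC

lemma entry_unique (ht : tree.IsTree) {C : Set T}
    (hconv : ∀ x ∈ C, ∀ y ∈ C, ∀ z ∈ (treePath ht x y).support, z ∈ C)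
    {r u1 u2 : T} (h1 : u1 ∈ C) (h2 : u2 ∈ C)
    (q1 : tree.Walk r u1) (hq1 : ∀ z ∈ q1.support, z ∈ C → z = u1)
    (q2 : tree.Walk r u2) (hq2 : ∀ z ∈ q2.support, z ∈ C → z = u2) :
    u1 = u2 := by
  have hp1 : ∀ z ∈ (treePath ht r u1).support, z ∈ C → z = u1 :=
    fun z hz => hq1 z (treePath_support_subset ht q1 hz)
  have hp2 : ∀ z ∈ (treePath ht r u2).support, z ∈ C → z = u2 :=
    fun z hz => hq2 z (treePath_support_subset ht q2 hz)
  clear hq1 hq2 q1 q2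
  by_cases hrC : r ∈ C
  · have e1 : r = u1 := hp1 r (Walk.start_mem_support _) hrC
    have e2 : r = u2 := hp2 r (Walk.start_mem_support _) hrC
    exact e1 ▸ e2
  -- wlog dist r u1 ≤ dist r u2
  wlog hle : tree.dist r u1 ≤ tree.dist r u2 with H
  · exact (H ht hconv h2 h1 hp2 hp1 hrC (le_of_not_ge hle)).symm
  by_contra hne
  have hne1 : u1 ≠ r := fun h => hrC (h ▸ h1)
  have hne2 : u2 ≠ r := fun h => hrC (h ▸ h2)
  have hd2pos : 0 < tree.dist r u2 :=
    ht.isConnected.pos_dist_of_ne (Ne.symm hne2)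
  set d2 := tree.dist r u2 with hd2
  -- penultimate vertex of the path r → u2
  set P2 := treePath ht r u2 with hP2def
  have hP2len : P2.length = d2 := treePath_length ht r u2
  set v := P2.getVert (d2 - 1) with hv
  have hvmem : v ∈ P2.support := by
    rw [Walk.mem_support_iff_exists_getVert]
    exact ⟨d2 - 1, rfl, by omega⟩
  have hadj : tree.Adj v u2 := by
    have h := P2.adj_getVert_succ (i := d2 - 1) (by omega)
    rw [show d2 - 1 + 1 = d2 by omega] at h
    rw [show P2.getVert d2 = u2 from hP2len ▸ P2.getVert_length] at h
    exact h
  have hdv : tree.dist r v = d2 - 1 := by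
    have hsplit := dist_add_dist_of_mem_treePath ht hvmem
    have hone : tree.dist v u2 = 1 := SimpleGraph.dist_eq_one_iff_adj.mpr hadj
    omega
  -- every vertex of P2 is on treePath r u1 or in C
  have key : ∀ z ∈ P2.support, z ∈ (treePath ht r u1).support ∨ z ∈ C := by
    intro z hz
    have hsub := treePath_support_subset ht
      ((treePath ht r u1).append (treePath ht u1 u2))
    have hz' := hsub hz
    rw [Walk.mem_support_append_iff] at hz'
    rcases hz' with h | h
    · exact Or.inl h
    · exact Or.inr (hconv u1 h1 u2 h2 z h)
  rcases key v hvmem with hvP1 | hvC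
  · -- v on path r→u1
    have hsplit := dist_add_dist_of_mem_treePath ht hvP1
    have hd1le : tree.dist r u1 ≤ d2 := hle
    by_cases hvu1 : tree.dist v u1 = 0
    · have hveq : v = u1 :=
        (ht.isConnected.dist_eq_zero_iff).mp hvu1
      exact hne (hp2 u1 (hveq ▸ hvmem) h1)
    · have hvu1' : tree.dist v u1 = 1 := by omega
      have hadj1 : tree.Adj v u1 := SimpleGraph.dist_eq_one_iff_adj.mp hvu1'
      -- u1 — v — u2 is a path, so v ∈ treePath u1 u2 ⊆ C
      have hw : tree.Walk u1 u2 := Walk.cons hadj1.symm (Walk.cons hadj Walk.nil)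
      have hwp : (Walk.cons hadj1.symm (Walk.cons hadj Walk.nil) : tree.Walk u1 u2).IsPath := by
        simp [Walk.isPath_def, hadj1.ne', hadj.ne, hne]
      have hveqpath : v ∈ (treePath ht u1 u2).support := by
        rw [← eq_treePath ht _ hwp]
        simp
      have hvC : v ∈ C := hconv u1 h1 u2 h2 v hveqpath
      have heq : v = u2 := hp2 v hvmem hvC
      rw [heq] at hdv
      omega
  · have heq : v = u2 := hp2 v hvmem hvC
    rw [heq] at hdv
    omega

lemma biclique (ht : tree.IsTree) {ι : Type} (C : ι → Set T)
    (hne : ∀ i, (C i).Nonempty)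
    (hconn : ∀ i, (tree.induce (C i)).Connected)
    (A B : Finset ι) (hA : A.Nonempty)
    (hmeet : ∀ a ∈ A, ∀ b ∈ B, (C a ∩ C b).Nonempty) :
    (∃ t, ∀ a ∈ A, t ∈ C a) ∨ (∃ t, ∀ b ∈ B, t ∈ C b) := by
  classical
  obtain ⟨r⟩ : Nonempty T := ht.isConnected.nonempty
  have hconv : ∀ i, ∀ x ∈ C i, ∀ y ∈ C i, ∀ z ∈ (treePath ht x y).support, z ∈ C i :=
    fun i x hx y hy => treePath_subset_of_induce_connected ht (hconn i) hx hy
  have H : ∀ i, ∃ u, u ∈ C i ∧ ∃ q : tree.Walk r u, ∀ z ∈ q.support, z ∈ C i → z = u := by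
    intro i
    obtain ⟨s, hs⟩ := hne i
    obtain ⟨u, hu, _, q, hq⟩ := exists_entry (treePath ht r s) hs
    exact ⟨u, hu, q, hq⟩
  choose t htmem q hq using H
  have hkey : ∀ i, ∀ s ∈ C i, t i ∈ (treePath ht r s).support := by
    intro i s hs
    obtain ⟨u, hu, hus, q', hq'⟩ := exists_entry (treePath ht r s) hs
    have heq : u = t i := entry_unique ht (hconv i) hu (htmem i) q' hq' (q i) (hq i)
    exact heq ▸ hus
  have sub : ∀ (X Y : Finset ι), (∀ x ∈ X, ∀ y ∈ Y, (C x ∩ C y).Nonempty) →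
      ∀ a ∈ X, (∀ j ∈ Y, tree.dist r (t j) ≤ tree.dist r (t a)) →
      ∀ b ∈ Y, t a ∈ C b := by
    intro X Y hm a ha hmax b hb
    obtain ⟨s, hsa, hsb⟩ := hm a ha b hb
    have h1 : t a ∈ (treePath ht r s).support := hkey a s hsa
    have h2 := treePath_support_subset ht
      ((treePath ht r (t b)).append (treePath ht (t b) s)) h1
    rw [Walk.mem_support_append_iff] at h2
    rcases h2 with h2 | h2
    · have hsplit := dist_add_dist_of_mem_treePath ht h2
      have hle := hmax b hb
      have hz : tree.dist (t a) (t b) = 0 := by omega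
      have heq : t a = t b := ht.isConnected.dist_eq_zero_iff.mp hz
      exact heq ▸ htmem b
    · exact hconv b (t b) (htmem b) s hsb _ h2
  rcases B.eq_empty_or_nonempty with rfl | hB
  · exact Or.inr ⟨r, by simp⟩
  obtain ⟨a, haAB, hmax⟩ := (A ∪ B).exists_max_image (fun i => tree.dist r (t i))
    ⟨hA.choose, Finset.mem_union_left _ hA.choose_spec⟩
  rcases Finset.mem_union.mp haAB with ha | ha
  · exact Or.inr ⟨t a, fun b hb =>
      sub A B hmeet a ha (fun j hj => hmax j (Finset.mem_union_right _ hj)) b hb⟩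
  · exact Or.inl ⟨t a, fun b hb =>
      sub B A (fun x hx y hy => Set.inter_comm (C y) (C x) ▸ hmeet y hy x hx) a ha
        (fun j hj => hmax j (Finset.mem_union_left _ hj)) b hb⟩

end TreeAux

section AlphaLemmas

variable {V : Type} [Finite V] (G : SimpleGraph V)

lemma alphaOn_set_bddAbove (W : Set V) :
    BddAbove {n | ∃ S : Finset V, ↑S ⊆ W ∧ G.IsIndep ↑S ∧ S.card = n} := by
  have := Fintype.ofFinite V
  refine ⟨Fintype.card V, ?_⟩
  rintro n ⟨S, -, -, rfl⟩
  exact S.card_le_univ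

omit [Finite V] in
lemma alphaOn_set_nonempty (W : Set V) :
    Set.Nonempty {n | ∃ S : Finset V, ↑S ⊆ W ∧ G.IsIndep ↑S ∧ S.card = n} := by
  refine ⟨0, ∅, by simp, by simp [SimpleGraph.IsIndep], rfl⟩

lemma le_alphaOn {W : Set V} {S : Finset V} (hSW : ↑S ⊆ W) (hind : G.IsIndep ↑S) :
    S.card ≤ alphaOn G W :=
  le_csSup (alphaOn_set_bddAbove G W) ⟨S, hSW, hind, rfl⟩

omit [Finite V] in
lemma alphaOn_le {W : Set V} {k : ℕ}
    (h : ∀ S : Finset V, ↑S ⊆ W → G.IsIndep ↑S → S.card ≤ k) :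
    alphaOn G W ≤ k := by
  refine csSup_le (alphaOn_set_nonempty G W) ?_
  rintro n ⟨S, hSW, hind, rfl⟩
  exact h S hSW hind

lemma exists_max_indep :
    ∃ S : Finset V, G.IsIndep ↑S ∧ S.card = alphaOn G Set.univ := by
  have hmem := Nat.sSup_mem (alphaOn_set_nonempty G Set.univ) (alphaOn_set_bddAbove G Set.univ)
  obtain ⟨S, -, hind, hcard⟩ := hmem
  exact ⟨S, hind, hcard⟩

end AlphaLemmas
theorem stmt4 {V : Type} [Finite V] (G : SimpleGraph V) :
    TreeAlphaLE (joinCopies G) (alphaOn G Set.univ) ∧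
    ∀ k : ℕ, TreeAlphaLE (joinCopies G) k → alphaOn G Set.univ ≤ k := by
  classical
  constructor
  · -- single-bag tree decomposition
    refine ⟨Unit, ⊥, ⟨fun _ => Set.univ, ?_, fun v => ⟨(), trivial⟩,
      fun u v _ => ⟨(), trivial, trivial⟩, fun v => ?_⟩, ?_⟩
    · exact ⟨Connected.mk (fun a b => (Subsingleton.elim a b) ▸ Reachable.refl a),
        isAcyclic_bot⟩
    · have hne : Nonempty ↑{t : Unit | v ∈ (Set.univ : Set (V ⊕ V))} := ⟨⟨(), trivial⟩⟩
      exact @Connected.mk _ _ (fun a b =>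
        (Subtype.ext (Subsingleton.elim a.1 b.1) : a = b) ▸ Reachable.refl a) hne
    · intro _
      refine alphaOn_le _ ?_
      intro S _ hind
      have hcases : (∀ x ∈ S, ∃ u, x = Sum.inl u) ∨ (∀ x ∈ S, ∃ u, x = Sum.inr u) := by
        by_contra hc
        push_neg at hc
        obtain ⟨⟨x, hx, hxl⟩, ⟨y, hy, hyr⟩⟩ := hc
        obtain ⟨a, rfl⟩ : ∃ a, x = Sum.inr a := by
          cases x with
          | inl u => exact absurd rfl (hxl u)
          | inr a => exact ⟨a, rfl⟩
        obtain ⟨b, rfl⟩ : ∃ b, y = Sum.inl b := by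
          cases y with
          | inl b => exact ⟨b, rfl⟩
          | inr u => exact absurd rfl (hyr u)
        exact hind (Finset.mem_coe.mpr hy) (Finset.mem_coe.mpr hx)
          Sum.inl_ne_inr trivial
      rcases hcases with hL | hR
      · set f : V ⊕ V → V := Sum.elim id id with hf
        have hinj : Set.InjOn f ↑S := by
          intro x hx y hy hxy
          obtain ⟨a, rfl⟩ := hL x (Finset.mem_coe.mp hx)
          obtain ⟨b, rfl⟩ := hL y (Finset.mem_coe.mp hy)
          simpa [hf] using hxy
        have hind' : G.IsIndep ↑(S.image f) := by
          intro a ha b hb hab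
          simp only [Finset.coe_image, Set.mem_image, Finset.mem_coe] at ha hb
          obtain ⟨x, hx, rfl⟩ := ha
          obtain ⟨y, hy, rfl⟩ := hb
          obtain ⟨a', rfl⟩ := hL x hx
          obtain ⟨b', rfl⟩ := hL y hy
          intro hGadj
          exact hind (Finset.mem_coe.mpr hx) (Finset.mem_coe.mpr hy)
            (fun h => hab (congrArg f h)) hGadj
        calc S.card = (S.image f).card := (Finset.card_image_of_injOn hinj).symm
          _ ≤ alphaOn G Set.univ := le_alphaOn G (by simp) hind'
      · set f : V ⊕ V → V := Sum.elim id id with hf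
        have hinj : Set.InjOn f ↑S := by
          intro x hx y hy hxy
          obtain ⟨a, rfl⟩ := hR x (Finset.mem_coe.mp hx)
          obtain ⟨b, rfl⟩ := hR y (Finset.mem_coe.mp hy)
          simpa [hf] using hxy
        have hind' : G.IsIndep ↑(S.image f) := by
          intro a ha b hb hab
          simp only [Finset.coe_image, Set.mem_image, Finset.mem_coe] at ha hb
          obtain ⟨x, hx, rfl⟩ := ha
          obtain ⟨y, hy, rfl⟩ := hb
          obtain ⟨a', rfl⟩ := hR x hx
          obtain ⟨b', rfl⟩ := hR y hy
          intro hGadj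
          exact hind (Finset.mem_coe.mpr hx) (Finset.mem_coe.mpr hy)
            (fun h => hab (congrArg f h)) hGadj
        calc S.card = (S.image f).card := (Finset.card_image_of_injOn hinj).symm
          _ ≤ alphaOn G Set.univ := le_alphaOn G (by simp) hind'
  · rintro k ⟨Tt, tr, td, hbags⟩
    obtain ⟨S, hSind, hScard⟩ := exists_max_indep G
    rcases S.eq_empty_or_nonempty with rfl | hSne
    · simp at hScard
      omega
    classical
    have hmeet : ∀ a ∈ S.image (Sum.inl : V → V ⊕ V), ∀ b ∈ S.image (Sum.inr : V → V ⊕ V),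
        ({t | a ∈ td.bag t} ∩ {t | b ∈ td.bag t}).Nonempty := by
      intro a ha b hb
      obtain ⟨u, _, rfl⟩ := Finset.mem_image.mp ha
      obtain ⟨v, _, rfl⟩ := Finset.mem_image.mp hb
      obtain ⟨t, h1, h2⟩ := td.edge_bag (show (joinCopies G).Adj (Sum.inl u) (Sum.inr v) from trivial)
      exact ⟨t, h1, h2⟩
    have hb := biclique td.isTree (fun (x : V ⊕ V) => {t | x ∈ td.bag t})
      (fun x => td.mem_bag x) (fun x => td.conn x)
      (S.image (Sum.inl : V → V ⊕ V)) (S.image (Sum.inr : V → V ⊕ V)) (hSne.image _) hmeet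
    rcases hb with ⟨t, hcov⟩ | ⟨t, hcov⟩
    · have hsub : ↑(S.image (Sum.inl : V → V ⊕ V)) ⊆ td.bag t := by
        intro x hx
        exact hcov x (Finset.mem_coe.mp hx)
      have hind' : (joinCopies G).IsIndep ↑(S.image (Sum.inl : V → V ⊕ V)) := by
        intro a ha b hb hab
        simp only [Finset.coe_image, Set.mem_image, Finset.mem_coe] at ha hb
        obtain ⟨u, hu, rfl⟩ := ha
        obtain ⟨v, hv, rfl⟩ := hb
        exact hSind (Finset.mem_coe.mpr hu) (Finset.mem_coe.mpr hv)
          (fun h => hab (congrArg Sum.inl h))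
      have hcard : (S.image (Sum.inl : V → V ⊕ V)).card = S.card :=
        Finset.card_image_of_injective _ Sum.inl_injective
      calc alphaOn G Set.univ = (S.image (Sum.inl : V → V ⊕ V)).card := by rw [hcard, hScard]
        _ ≤ alphaOn (joinCopies G) (td.bag t) := le_alphaOn _ hsub hind'
        _ ≤ k := hbags t
    · have hsub : ↑(S.image (Sum.inr : V → V ⊕ V)) ⊆ td.bag t := by
        intro x hx
        exact hcov x (Finset.mem_coe.mp hx)
      have hind' : (joinCopies G).IsIndep ↑(S.image (Sum.inr : V → V ⊕ V)) := by
        intro a ha b hb hab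
        simp only [Finset.coe_image, Set.mem_image, Finset.mem_coe] at ha hb
        obtain ⟨u, hu, rfl⟩ := ha
        obtain ⟨v, hv, rfl⟩ := hb
        exact hSind (Finset.mem_coe.mpr hu) (Finset.mem_coe.mpr hv)
          (fun h => hab (congrArg Sum.inr h))
      have hcard : (S.image (Sum.inr : V → V ⊕ V)).card = S.card :=
        Finset.card_image_of_injective _ Sum.inr_injective
      calc alphaOn G Set.univ = (S.image (Sum.inr : V → V ⊕ V)).card := by rw [hcard, hScard]
        _ ≤ alphaOn (joinCopies G) (td.bag t) := le_alphaOn _ hsub hind'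
        _ ≤ k := hbags t
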